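/- For every n ≥ 1, the absolute value of the term a_n = (n!)^10 (205n² + 250n + 77) / (64 ((2n+1)!)^5) satisfies a_{n+1}/a_n ≤ 1/512, hence the partial sums of Σ (-1)^n a_n approximate the limit with error at most a_{N} at stage N. -/

import Mathlib

open Filter Finset Topology

theorem zeta3_series_ratio_and_error
    (a : ℕ → ℝ)
    (ha : ∀ n : ℕ, a n = (Nat.factorial n : ℝ) ^ 10 *
      (205 * (n : ℝ) ^ 2 + 250 * (n : ℝ) + 77) /
      (64 * (Nat.factorial (2 * n + 1) : ℝ) ^ 5)) :
    (∀ n : ℕ, 1 ≤ n → a (n + 1) / a n ≤ 1 / 512) ∧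
    (∀ N : ℕ, 1 ≤ N →
      |(∑' n : ℕ, (-1 : ℝ) ^ n * a n) - ∑ n ∈ Finset.range N, (-1 : ℝ) ^ n * a n|
        ≤ a N) := by
  have hpos : ∀ n : ℕ, 0 < a n := by
    intro n
    rw [ha n]
    have hF : (0:ℝ) < (Nat.factorial n : ℝ) := by exact_mod_cast n.factorial_pos
    have hG : (0:ℝ) < (Nat.factorial (2*n+1) : ℝ) := by exact_mod_cast (2*n+1).factorial_pos
    have hx : (0:ℝ) ≤ (n:ℝ) := Nat.cast_nonneg n
    positivity
  have hkey : ∀ n : ℕ, 512 * a (n+1) ≤ a n := by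
    intro n
    have hF : (0:ℝ) < (Nat.factorial n : ℝ) := by exact_mod_cast n.factorial_pos
    have hG : (0:ℝ) < (Nat.factorial (2*n+1) : ℝ) := by exact_mod_cast (2*n+1).factorial_pos
    have hx : (0:ℝ) ≤ (n:ℝ) := Nat.cast_nonneg n
    have e1 : (Nat.factorial (n+1) : ℝ) = ((n:ℝ)+1) * (Nat.factorial n : ℝ) := by
      rw [Nat.factorial_succ]; push_cast; ring
    have e2 : (Nat.factorial (2*(n+1)+1) : ℝ)
        = (2*(n:ℝ)+3) * ((2*(n:ℝ)+2) * (Nat.factorial (2*n+1) : ℝ)) := by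
      rw [show 2*(n+1)+1 = (2*n+1)+1+1 from by ring, Nat.factorial_succ, Nat.factorial_succ]
      push_cast; ring
    rw [ha n, ha (n+1), e1, e2]
    set x : ℝ := (n:ℝ) with hxdef
    set F : ℝ := (Nat.factorial n : ℝ)
    set G : ℝ := (Nat.factorial (2*n+1) : ℝ)
    have hcast : ((n+1 : ℕ) : ℝ) = x + 1 := by push_cast; ring
    rw [hcast]
    rw [mul_div_assoc', div_le_div_iff₀ (by positivity) (by positivity)]
    have hp : 512 * ((x+1)^10 * (205*(x+1)^2 + 250*(x+1) + 77))
        ≤ ((2*x+3)*(2*x+2))^5 * (205*x^2 + 250*x + 77) := by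
      nlinarith [pow_nonneg hx 2, pow_nonneg hx 3, pow_nonneg hx 4, pow_nonneg hx 5,
        pow_nonneg hx 6, pow_nonneg hx 7, pow_nonneg hx 8, pow_nonneg hx 9,
        pow_nonneg hx 10, pow_nonneg hx 11, pow_nonneg hx 12, hx]
    have h64 : (0:ℝ) ≤ 64 * F^10 * G^5 := by positivity
    nlinarith [mul_le_mul_of_nonneg_left hp h64]
  have hanti : Antitone a := by
    refine antitone_nat_of_succ_le fun n => ?_
    nlinarith [hkey n, hpos (n+1)]
  have hbound : ∀ n : ℕ, a n ≤ a 0 * (1/512)^n := by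
    intro n
    induction n with
    | zero => simp
    | succ k ih =>
      have := hkey k
      have h2 : a (k+1) ≤ a k / 512 := by linarith
      calc a (k+1) ≤ a k / 512 := h2
        _ ≤ (a 0 * (1/512)^k) / 512 := by
            apply div_le_div_of_nonneg_right ih (by norm_num) |>.trans_eq rfl
        _ = a 0 * (1/512)^(k+1) := by ring
  have htend0 : Tendsto a atTop (𝓝 0) := by
    have hg : Tendsto (fun n : ℕ => a 0 * (1/512)^n) atTop (𝓝 (a 0 * 0)) :=
      (tendsto_pow_atTop_nhds_zero_of_lt_one (by norm_num) (by norm_num)).const_mul (a 0)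
    rw [mul_zero] at hg
    exact squeeze_zero (fun n => (hpos n).le) hbound hg
  have hsummable : Summable (fun n : ℕ => (-1:ℝ)^n * a n) := by
    apply Summable.of_norm_bounded (g := fun n : ℕ => a 0 * (1/512)^n)
    · exact (summable_geometric_of_lt_one (by norm_num) (by norm_num)).mul_left (a 0)
    · intro n
      have : ‖(-1:ℝ)^n * a n‖ = a n := by
        rw [norm_mul, norm_pow, norm_neg, norm_one, one_pow, one_mul,
          Real.norm_eq_abs, abs_of_pos (hpos n)]
      rw [this]; exact hbound n
  have hl : Tendsto (fun n => ∑ i ∈ range n, (-1:ℝ)^i * a i) atTop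
      (𝓝 (∑' n : ℕ, (-1:ℝ)^n * a n)) := hsummable.hasSum.tendsto_sum_nat
  constructor
  · intro n hn
    rw [div_le_div_iff₀ (hpos n) (by norm_num)]
    have := hkey n
    linarith
  · intro N hN
    set l := ∑' n : ℕ, (-1:ℝ)^n * a n with hldef
    rw [abs_sub_le_iff]
    rcases Nat.even_or_odd N with ⟨k, hk⟩ | ⟨k, hk⟩
    · subst hk
      have hlow : ∑ i ∈ range (2*k), (-1:ℝ)^i * a i ≤ l :=
        hanti.alternating_series_le_tendsto hl k
      have hup : l ≤ ∑ i ∈ range (2*k+1), (-1:ℝ)^i * a i :=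
        hanti.tendsto_le_alternating_series hl k
      have hs : ∑ i ∈ range (2*k+1), (-1:ℝ)^i * a i
          = ∑ i ∈ range (2*k), (-1:ℝ)^i * a i + a (2*k) := by
        rw [sum_range_succ]
        simp [pow_mul]
      rw [show k + k = 2*k from by ring]
      constructor <;> [linarith [hup, hs]; linarith [hlow, hpos (2*k)]]
    · subst hk
      have hup : l ≤ ∑ i ∈ range (2*k+1), (-1:ℝ)^i * a i :=
        hanti.tendsto_le_alternating_series hl k
      have hlow : ∑ i ∈ range (2*(k+1)), (-1:ℝ)^i * a i ≤ l :=
        hanti.alternating_series_le_tendsto hl (k+1)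
      have hs : ∑ i ∈ range (2*(k+1)), (-1:ℝ)^i * a i
          = ∑ i ∈ range (2*k+1), (-1:ℝ)^i * a i - a (2*k+1) := by
        rw [show 2*(k+1) = (2*k+1)+1 from by ring, sum_range_succ]
        have : (-1:ℝ)^(2*k+1) = -1 := by
          rw [pow_succ, pow_mul]; norm_num
        rw [this]; ring
      constructor <;> [linarith [hup, hpos (2*k+1)]; linarith [hlow, hs]]
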